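/- If a set A ⊆ ℝ × ℝ does not have the Baire property, then there exist nonempty open intervals U, W ⊆ ℝ such that both A ∩ (U × W) and (U × W) ∖ A are nowhere meager in the subspace U × W. -/

import Mathlib

open scoped symmDiff
open Set TopologicalSpace

lemma IsMeagre.union' {X : Type*} [TopologicalSpace X] {s t : Set X}
    (hs : IsMeagre s) (ht : IsMeagre t) : IsMeagre (s ∪ t) := by
  rw [IsMeagre, Set.compl_union]
  exact Filter.inter_mem hs ht

/-- A nowhere dense subset of an open subspace is nowhere dense in the ambient space. -/
lemma nwd_of_subtype {X : Type*} [TopologicalSpace X] {B : Set X} (hB : IsOpen B)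
    {t : Set ↥B} (ht : IsNowhereDense t) : IsNowhereDense (Subtype.val '' t) := by
  rw [IsNowhereDense, Set.eq_empty_iff_forall_notMem]
  intro x hx
  set W := interior (closure (Subtype.val '' t)) with hW
  have hWo : IsOpen W := isOpen_interior
  have hWc : W ⊆ closure (Subtype.val '' t) := interior_subset
  obtain ⟨y, hyW, hyt⟩ : (W ∩ Subtype.val '' t).Nonempty := by
    have := hWc hx
    rw [mem_closure_iff] at this
    exact this W hWo hx
  have hyB : y ∈ B := by rcases hyt with ⟨p, _, rfl⟩; exact p.2
  -- the preimage of W in the subspace is open, nonempty, inside closure t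
  have hne : ((Subtype.val : ↥B → X) ⁻¹' W).Nonempty := ⟨⟨y, hyB⟩, hyW⟩
  have hopen : IsOpen ((Subtype.val : ↥B → X) ⁻¹' W) := hWo.preimage continuous_subtype_val
  have hsub : (Subtype.val : ↥B → X) ⁻¹' W ⊆ closure t := by
    rintro ⟨z, hzB⟩ hz
    rw [mem_closure_iff]
    intro o ho hzo
    rw [isOpen_induced_iff] at ho
    obtain ⟨u, hu, rfl⟩ := ho
    have hz' : z ∈ closure (Subtype.val '' t) := hWc hz
    rw [mem_closure_iff] at hz'
    obtain ⟨w, ⟨hwu, hwB⟩, hwt⟩ := hz' (u ∩ B) (hu.inter hB) ⟨hzo, hzB⟩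
    rcases hwt with ⟨p, hp, rfl⟩
    exact ⟨p, hwu, hp⟩
  have h2 := hopen.subset_interior_iff.mpr hsub
  rw [IsNowhereDense] at ht
  rw [ht] at h2
  exact absurd (h2 hne.choose_spec) (Set.notMem_empty _)

/-- If the preimage of `s ⊆ B` in the open subspace `B` is meagre, `s` is meagre. -/
lemma meagre_of_preimage_meagre {X : Type*} [TopologicalSpace X] {B : Set X} (hB : IsOpen B)
    {s : Set X} (hs : s ⊆ B) (h : IsMeagre ((Subtype.val : ↥B → X) ⁻¹' s)) : IsMeagre s := by
  rw [isMeagre_iff_countable_union_isNowhereDense] at h ⊢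
  obtain ⟨S, hnwd, hcnt, hcov⟩ := h
  refine ⟨(fun t => Subtype.val '' t) '' S, ?_, hcnt.image _, ?_⟩
  · rintro _ ⟨t, htS, rfl⟩
    exact nwd_of_subtype hB (hnwd t htS)
  · intro x hx
    obtain ⟨t, htS, hxt⟩ := hcov (show (⟨x, hs hx⟩ : ↥B) ∈ _ from hx)
    exact ⟨Subtype.val '' t, ⟨t, htS, rfl⟩, ⟨_, hxt, rfl⟩⟩



/-- A set has the Baire property if it equals the symmetric difference of an
open set and a meager set. -/
def HasBaireProperty {X : Type*} [TopologicalSpace X] (S : Set X) : Prop :=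
  ∃ U M : Set X, IsOpen U ∧ IsMeagre M ∧ S = U ∆ M

/-- A set `A` is nowhere meager in `X` if `A ∩ U` is nonmeager for every
nonempty open `U ⊆ X`. -/
def NowhereMeager {X : Type*} [TopologicalSpace X] (A : Set X) : Prop :=
  ∀ U : Set X, IsOpen U → U.Nonempty → ¬ IsMeagre (A ∩ U)

/-- Banach category style: A ∩ ⋃{open V | A∩V meagre} is meagre, in a 2nd countable space. -/
lemma meagre_inter_sUnion {X : Type*} [TopologicalSpace X] [SecondCountableTopology X]
    (A : Set X) : IsMeagre (A ∩ ⋃₀ {V | IsOpen V ∧ IsMeagre (A ∩ V)}) := by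
  obtain ⟨b, hbc, -, hbasis⟩ := exists_countable_basis X
  set b' : Set (Set X) := {v ∈ b | IsMeagre (A ∩ v)} with hb'
  have hsub : A ∩ ⋃₀ {V | IsOpen V ∧ IsMeagre (A ∩ V)} ⊆ ⋃₀ ((fun v => A ∩ v) '' b') := by
    rintro x ⟨hxA, V, ⟨hVo, hVm⟩, hxV⟩
    obtain ⟨v, hvb, hxv, hvV⟩ := hbasis.exists_subset_of_mem_open hxV hVo
    exact ⟨A ∩ v, ⟨v, ⟨hvb, hVm.mono (Set.inter_subset_inter_right _ hvV)⟩, rfl⟩, hxA, hxv⟩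
  refine IsMeagre.mono hsub ?_
  rw [IsMeagre, Set.compl_sUnion]
  refine (countable_sInter_mem (((hbc.mono (Set.sep_subset _ _)).image _).image _)).mpr ?_
  rintro _ ⟨_, ⟨v, ⟨hvb, hvm⟩, rfl⟩, rfl⟩
  exact hvm

theorem stmt_6 (A : Set (ℝ × ℝ)) (hA : ¬ HasBaireProperty A) :
    ∃ a b c d : ℝ, a < b ∧ c < d ∧
      -- `A ∩ (U × W)` is nowhere meager in the subspace `U × W`
      NowhereMeager {p : ↥(Set.Ioo a b ×ˢ Set.Ioo c d) | (p : ℝ × ℝ) ∈ A} ∧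
      -- `(U × W) \ A` is nowhere meager in the subspace `U × W`
      NowhereMeager {p : ↥(Set.Ioo a b ×ˢ Set.Ioo c d) | (p : ℝ × ℝ) ∉ A} := by
  classical
  set G : Set (ℝ × ℝ) := ⋃₀ {V | IsOpen V ∧ IsMeagre (A ∩ V)} with hG
  set H : Set (ℝ × ℝ) := ⋃₀ {V | IsOpen V ∧ IsMeagre (Aᶜ ∩ V)} with hH
  have hGo : IsOpen G := isOpen_sUnion fun V hV => hV.1
  have hHo : IsOpen H := isOpen_sUnion fun V hV => hV.1
  have hGm : IsMeagre (A ∩ G) := meagre_inter_sUnion A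
  have hHm : IsMeagre (Aᶜ ∩ H) := meagre_inter_sUnion Aᶜ
  -- G ∪ H is not dense
  have hnd : ¬ Dense (G ∪ H) := by
    intro hd
    apply hA
    refine ⟨H, H ∆ A, hHo, ?_, (symmDiff_symmDiff_cancel_left H A).symm⟩
    have h1 : IsMeagre ((G ∪ H)ᶜ) := by
      rw [IsMeagre, compl_compl]
      exact residual_of_dense_open (hGo.union hHo) hd
    have h2 : H ∆ A ⊆ (A ∩ G) ∪ (Aᶜ ∩ H) ∪ (G ∪ H)ᶜ := by
      rintro x hx
      rw [Set.mem_symmDiff] at hx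
      rcases hx with ⟨hxH, hxA⟩ | ⟨hxA, hxG'⟩
      · exact Or.inl (Or.inr ⟨hxA, hxH⟩)
      · by_cases hxG : x ∈ G
        · exact Or.inl (Or.inl ⟨hxA, hxG⟩)
        · exact Or.inr (by simp [hxG, hxG'])
    exact ((hGm.union' hHm).union' h1).mono h2
  -- extract a box disjoint from G ∪ H
  rw [dense_iff_inter_open] at hnd
  push_neg at hnd
  obtain ⟨W, hWo, hWne, hWdisj⟩ := hnd
  obtain ⟨x, hxW⟩ := hWne
  obtain ⟨u, v, huo, hvo, hxu, hxv, huv⟩ := isOpen_prod_iff.mp hWo x.1 x.2 (by simpa using hxW)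
  obtain ⟨a, b, hxab, hIab⟩ := mem_nhds_iff_exists_Ioo_subset.mp (huo.mem_nhds hxu)
  obtain ⟨c, d, hxcd, hIcd⟩ := mem_nhds_iff_exists_Ioo_subset.mp (hvo.mem_nhds hxv)
  have hab : a < b := hxab.1.trans hxab.2
  have hcd : c < d := hxcd.1.trans hxcd.2
  set P : Set (ℝ × ℝ) := Set.Ioo a b ×ˢ Set.Ioo c d with hP
  have hPW : P ⊆ W := fun p hp => huv ⟨hIab hp.1, hIcd hp.2⟩
  have hPo : IsOpen P := (isOpen_Ioo).prod isOpen_Ioo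
  have hPdisj : P ∩ (G ∪ H) = ∅ := by
    rw [Set.eq_empty_iff_forall_notMem]
    intro p hp
    rw [Set.eq_empty_iff_forall_notMem] at hWdisj
    exact hWdisj p ⟨hPW hp.1, hp.2⟩
  -- key ambient property
  have key : ∀ V : Set (ℝ × ℝ), IsOpen V → (V ∩ P).Nonempty →
      ¬ IsMeagre (A ∩ (V ∩ P)) ∧ ¬ IsMeagre (Aᶜ ∩ (V ∩ P)) := by
    intro V hVo hVP
    constructor
    · intro hm
      have : V ∩ P ⊆ G := fun y hy => ⟨V ∩ P, ⟨hVo.inter hPo, hm⟩, hy⟩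
      obtain ⟨y, hy⟩ := hVP
      exact (Set.eq_empty_iff_forall_notMem.mp hPdisj y) ⟨hy.2, Or.inl (this hy)⟩
    · intro hm
      have : V ∩ P ⊆ H := fun y hy => ⟨V ∩ P, ⟨hVo.inter hPo, hm⟩, hy⟩
      obtain ⟨y, hy⟩ := hVP
      exact (Set.eq_empty_iff_forall_notMem.mp hPdisj y) ⟨hy.2, Or.inr (this hy)⟩
  refine ⟨a, b, c, d, hab, hcd, ?_, ?_⟩
  · intro U hUo hUne hm
    rw [isOpen_induced_iff] at hUo
    obtain ⟨V, hVo, rfl⟩ := hUo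
    obtain ⟨p, hp⟩ := hUne
    have hs : A ∩ (V ∩ P) ⊆ P := fun y hy => hy.2.2
    have : IsMeagre (A ∩ (V ∩ P)) := by
      refine meagre_of_preimage_meagre hPo hs ?_
      refine hm.mono ?_
      rintro q hq
      have hq' : (q : ℝ × ℝ) ∈ _ ∩ (V ∩ P) := hq
      exact ⟨hq'.1, hq'.2.1⟩
    exact ((key V hVo ⟨↑p, hp, p.2⟩).1) this
  · intro U hUo hUne hm
    rw [isOpen_induced_iff] at hUo
    obtain ⟨V, hVo, rfl⟩ := hUo
    obtain ⟨p, hp⟩ := hUne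
    have hs : Aᶜ ∩ (V ∩ P) ⊆ P := fun y hy => hy.2.2
    have : IsMeagre (Aᶜ ∩ (V ∩ P)) := by
      refine meagre_of_preimage_meagre hPo hs ?_
      refine hm.mono ?_
      rintro q hq
      have hq' : (q : ℝ × ℝ) ∈ _ ∩ (V ∩ P) := hq
      exact ⟨hq'.1, hq'.2.1⟩
    exact ((key V hVo ⟨↑p, hp, p.2⟩).2) this
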